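/- Lower bound for the Leray denominator Φ on the convex configuration (inequality (3.24)-type consequence of (3.13)): Under the hypotheses of the Leray support-function inequality — n ≥ 1, 1 ≤ q ≤ n, λ₁, …, λ_{q−1} ∈ [−1,1], R : ℂⁿ → ℝ a C² function whose value, first derivative and second derivative all vanish at the origin, ρ(z) = −Im z_n + Σ_{j=1}^{q−1} λ_j |z_j|² + Σ_{j=q}^{n} |z_j|² + R(z), g_j(z,ζ) = (∂ρ/∂ζ_j)(ζ) + (conj ζ_j − conj z_j) for j < q and g_j(z,ζ) = (∂ρ/∂ζ_j)(ζ) for j ≥ q — there is a neighborhood U of 0 in ℂⁿ such that for all z, ζ ∈ U with ρ(z) ≤ 0 ≤ ρ(ζ), the quantity Φ(z, ζ) = Σ_{j=1}^{n} g_j(z, ζ)(ζ_j − z_j) satisfies |Φ(z, ζ)| ≥ (1/2)(ρ(ζ) − ρ(z)) + (1/4)|ζ − z|². -/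

import Mathlib

open Complex

/-- The Wirtinger derivative `∂ρ/∂ζ_j = ½(∂ρ/∂x_j − i ∂ρ/∂y_j)` of a real-valued
function `ρ` on `ℂⁿ` at `ζ`, in the `j`-th coordinate. -/
noncomputable def wderiv (n : ℕ) (ρ : EuclideanSpace ℂ (Fin n) → ℝ)
    (ζ : EuclideanSpace ℂ (Fin n)) (j : Fin n) : ℂ :=
  (1 / 2 : ℂ) *
    ((fderiv ℝ ρ ζ (EuclideanSpace.single j 1) : ℂ) -
      Complex.I * (fderiv ℝ ρ ζ (EuclideanSpace.single j Complex.I) : ℂ))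

lemma aux_single_decomp (n : ℕ) (v : EuclideanSpace ℂ (Fin n)) :
    ∑ j, EuclideanSpace.single j (v j) = v := by
  ext i
  rw [show ((∑ j, EuclideanSpace.single j (v j)) i)
      = ∑ j, (EuclideanSpace.single j (v j) : EuclideanSpace ℂ (Fin n)) i from
    by rw [WithLp.ofLp_sum]; exact Finset.sum_apply i Finset.univ _]
  simp [EuclideanSpace.single_apply]

lemma aux_single_smul (n : ℕ) (j : Fin n) (w : ℂ) :
    EuclideanSpace.single j w =
      w.re • EuclideanSpace.single j (1:ℂ) + w.im • EuclideanSpace.single j Complex.I := by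
  ext i
  by_cases h : i = j <;> simp [EuclideanSpace.single_apply, h, Complex.ext_iff]

lemma two_re_wderiv_mul (n : ℕ) (ρ : EuclideanSpace ℂ (Fin n) → ℝ)
    (ζ : EuclideanSpace ℂ (Fin n)) (j : Fin n) (w : ℂ) :
    2 * (wderiv n ρ ζ j * w).re = fderiv ℝ ρ ζ (EuclideanSpace.single j w) := by
  rw [aux_single_smul n j w, map_add, map_smul, map_smul]
  simp [wderiv, Complex.mul_re, Complex.mul_im, smul_eq_mul]
  ring

lemma two_re_sum_wderiv (n : ℕ) (ρ : EuclideanSpace ℂ (Fin n) → ℝ)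
    (ζ v : EuclideanSpace ℂ (Fin n)) :
    2 * (∑ j, wderiv n ρ ζ j * v j).re = fderiv ℝ ρ ζ v := by
  conv_rhs => rw [← aux_single_decomp n v, map_sum]
  rw [Complex.re_sum, Finset.mul_sum]
  exact Finset.sum_congr rfl fun j _ => two_re_wderiv_mul n ρ ζ j (v j)

lemma rho_fderiv_formula (n : ℕ) (k : Fin n) (a : Fin n → ℝ)
    (R : EuclideanSpace ℂ (Fin n) → ℝ) (hRd : Differentiable ℝ R)
    (ρ : EuclideanSpace ℂ (Fin n) → ℝ)
    (hρ : ∀ z, ρ z = -(z k).im + ∑ j, a j * ‖z j‖ ^ 2 + R z)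
    (ζ : EuclideanSpace ℂ (Fin n)) :
    ∃ D : EuclideanSpace ℂ (Fin n) →L[ℝ] ℝ, HasFDerivAt ρ D ζ ∧ ∀ v, D v =
      -(v k).im + (∑ j, 2 * a j * ((ζ j).re * (v j).re + (ζ j).im * (v j).im))
        + fderiv ℝ R ζ v := by
  classical
  set pr : Fin n → (EuclideanSpace ℂ (Fin n) →L[ℝ] ℂ) :=
    fun j => (EuclideanSpace.proj j).restrictScalars ℝ with hpr
  set rc : Fin n → (EuclideanSpace ℂ (Fin n) →L[ℝ] ℝ) :=
    fun j => Complex.reCLM.comp (pr j) with hrc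
  set ic : Fin n → (EuclideanSpace ℂ (Fin n) →L[ℝ] ℝ) :=
    fun j => Complex.imCLM.comp (pr j) with hic
  have hrca : ∀ j z, rc j z = (z j).re := fun j z => rfl
  have hica : ∀ j z, ic j z = (z j).im := fun j z => rfl
  have h0 : HasFDerivAt (fun z : EuclideanSpace ℂ (Fin n) => -(z k).im) (-(ic k)) ζ :=
    ((ic k).hasFDerivAt).neg
  have hj : ∀ j : Fin n, HasFDerivAt (fun z : EuclideanSpace ℂ (Fin n) => a j * ‖z j‖ ^ 2)
      ((a j) • ((rc j ζ • rc j + rc j ζ • rc j) + (ic j ζ • ic j + ic j ζ • ic j))) ζ := by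
    intro j
    have h1 : HasFDerivAt (fun z : EuclideanSpace ℂ (Fin n) => rc j z * rc j z + ic j z * ic j z)
        ((rc j ζ • rc j + rc j ζ • rc j) + (ic j ζ • ic j + ic j ζ • ic j)) ζ :=
      (((rc j).hasFDerivAt.mul (rc j).hasFDerivAt)).add
        (((ic j).hasFDerivAt.mul (ic j).hasFDerivAt))
    have h2 := h1.const_mul (a j)
    have hfun : (fun z : EuclideanSpace ℂ (Fin n) => a j * (rc j z * rc j z + ic j z * ic j z))
        = fun z => a j * ‖z j‖ ^ 2 := by
      funext z
      rw [hrca, hica]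
      rw [show ‖z j‖ ^ 2 = Complex.normSq (z j) from by
        exact Complex.sq_norm _, Complex.normSq_apply]
    rwa [hfun] at h2
  have hsum : HasFDerivAt (fun z : EuclideanSpace ℂ (Fin n) => ∑ j, a j * ‖z j‖ ^ 2)
      (∑ j, (a j) • ((rc j ζ • rc j + rc j ζ • rc j) + (ic j ζ • ic j + ic j ζ • ic j))) ζ :=
    HasFDerivAt.fun_sum (fun j _ => hj j)
  have hRf : HasFDerivAt R (fderiv ℝ R ζ) ζ := (hRd ζ).hasFDerivAt
  have hρf : HasFDerivAt ρ ((-(ic k) +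
      ∑ j, (a j) • ((rc j ζ • rc j + rc j ζ • rc j) + (ic j ζ • ic j + ic j ζ • ic j)))
      + fderiv ℝ R ζ) ζ := by
    have := (h0.add hsum).add hRf
    have hfun : (fun z : EuclideanSpace ℂ (Fin n) =>
        (-(z k).im + ∑ j, a j * ‖z j‖ ^ 2) + R z) = ρ := by
      funext z; rw [hρ z]
    rw [← hfun]; exact this
  refine ⟨_, hρf, fun v => ?_⟩
  simp only [ContinuousLinearMap.add_apply, ContinuousLinearMap.neg_apply,
    ContinuousLinearMap.sum_apply, ContinuousLinearMap.smul_apply, smul_eq_mul,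
    hrca, hica]
  congr 1
  congr 1
  exact Finset.sum_congr rfl fun j _ => by ring

open Metric in
lemma exists_small_ball (n : ℕ) (R : EuclideanSpace ℂ (Fin n) → ℝ) (hR : ContDiff ℝ 2 R)
    (hR2 : iteratedFDeriv ℝ 2 R 0 = 0) :
    ∃ r > 0, ∀ x ∈ ball (0 : EuclideanSpace ℂ (Fin n)) r,
      ‖fderiv ℝ (fderiv ℝ R) x‖ ≤ 1/8 := by
  have hR1 : ContDiff ℝ 1 (fderiv ℝ R) := hR.fderiv_right (by norm_num)
  have hcont : Continuous (fun x => fderiv ℝ (fderiv ℝ R) x) := hR1.continuous_fderiv one_ne_zero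
  have hF0 : fderiv ℝ (fderiv ℝ R) 0 = 0 := by
    refine ContinuousLinearMap.ext fun u => ContinuousLinearMap.ext fun w => ?_
    have := iteratedFDeriv_two_apply (𝕜 := ℝ) R (0 : EuclideanSpace ℂ (Fin n)) ![u, w]
    rw [hR2] at this
    simpa using this.symm
  obtain ⟨r, hr0, hr⟩ := (Metric.continuousAt_iff (f := fun x : EuclideanSpace ℂ (Fin n) => fderiv ℝ (fderiv ℝ R) x) (a := 0)).mp (by exact hcont.continuousAt) (1/8) (by norm_num)
  refine ⟨r, hr0, fun x hx => ?_⟩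
  have := hr (show dist x 0 < r from mem_ball.mp hx)
  rw [hF0] at this
  exact le_of_lt (lt_of_eq_of_lt (by exact (dist_zero_right (fderiv ℝ (fderiv ℝ R) x)).symm) (by exact this))

open Metric in
lemma taylor_quad (n : ℕ) (R : EuclideanSpace ℂ (Fin n) → ℝ) (hR : ContDiff ℝ 2 R)
    (r : ℝ) (hb : ∀ x ∈ ball (0 : EuclideanSpace ℂ (Fin n)) r, ‖fderiv ℝ (fderiv ℝ R) x‖ ≤ 1/8)
    (z ζ : EuclideanSpace ℂ (Fin n)) (hz : z ∈ ball (0 : EuclideanSpace ℂ (Fin n)) r)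
    (hζ : ζ ∈ ball (0 : EuclideanSpace ℂ (Fin n)) r) :
    ‖R z - R ζ - fderiv ℝ R ζ (z - ζ)‖ ≤ (1/8) * ‖z - ζ‖ ^ 2 := by
  have hR1 : ContDiff ℝ 1 (fderiv ℝ R) := hR.fderiv_right (by norm_num)
  have hRd : Differentiable ℝ R := hR.differentiable (by norm_num)
  have hseg : segment ℝ ζ z ⊆ ball (0 : EuclideanSpace ℂ (Fin n)) r :=
    (convex_ball _ _).segment_subset hζ hz
  have hbd : ∀ w ∈ segment ℝ ζ z, ‖fderiv ℝ R w - fderiv ℝ R ζ‖ ≤ (1/8) * ‖z - ζ‖ := by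
    intro w hw
    have h1 : ‖fderiv ℝ R w - fderiv ℝ R ζ‖ ≤ (1/8) * ‖w - ζ‖ :=
      (convex_ball _ _).norm_image_sub_le_of_norm_fderiv_le
        (fun x _ => (hR1.differentiable one_ne_zero) x) hb hζ (hseg hw)
    have h2 : ‖w - ζ‖ ≤ ‖z - ζ‖ := by
      have hsub : segment ℝ ζ z ⊆ closedBall ζ (dist z ζ) :=
        (convex_closedBall _ _).segment_subset (mem_closedBall_self dist_nonneg)
          (mem_closedBall.2 le_rfl)
      have := hsub hw
      rw [mem_closedBall, dist_eq_norm, dist_eq_norm] at this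
      exact this
    nlinarith [norm_nonneg (fderiv ℝ R w - fderiv ℝ R ζ)]
  have key := (convex_segment ζ z).norm_image_sub_le_of_norm_fderiv_le'
    (fun x _ => hRd x) hbd (left_mem_segment ℝ ζ z) (right_mem_segment ℝ ζ z)
  calc ‖R z - R ζ - fderiv ℝ R ζ (z - ζ)‖ ≤ (1/8) * ‖z - ζ‖ * ‖z - ζ‖ := key
    _ = (1/8) * ‖z - ζ‖ ^ 2 := by ring

set_option maxHeartbeats 1600000

/-- Lower bound for the Leray denominator `Φ` on the convex configuration
(a (3.24)-type consequence of (3.13)).  Coordinates are 0-indexed. -/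
theorem stmt5 (n q : ℕ) (hn : 1 ≤ n) (hq1 : 1 ≤ q) (hqn : q ≤ n)
    (lam : Fin n → ℝ) (hlam : ∀ j : Fin n, (j : ℕ) < q - 1 → |lam j| ≤ 1)
    (R : EuclideanSpace ℂ (Fin n) → ℝ) (hR : ContDiff ℝ 2 R)
    (hR0 : R 0 = 0) (hR1 : fderiv ℝ R 0 = 0) (hR2 : iteratedFDeriv ℝ 2 R 0 = 0)
    (ρ : EuclideanSpace ℂ (Fin n) → ℝ)
    (hρ : ∀ z, ρ z = -(z ⟨n - 1, Nat.sub_lt hn Nat.one_pos⟩).im +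
        ∑ j : Fin n, (if (j : ℕ) < q - 1 then lam j else 1) * ‖z j‖ ^ 2 + R z)
    (g : EuclideanSpace ℂ (Fin n) → EuclideanSpace ℂ (Fin n) → Fin n → ℂ)
    (hg : ∀ z ζ j, g z ζ j =
        if (j : ℕ) < q - 1 then wderiv n ρ ζ j + (starRingEnd ℂ (ζ j) - starRingEnd ℂ (z j))
        else wderiv n ρ ζ j) :
    ∃ U ∈ nhds (0 : EuclideanSpace ℂ (Fin n)), ∀ z ∈ U, ∀ ζ ∈ U,
      ρ z ≤ 0 → 0 ≤ ρ ζ →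
      (1 / 2) * (ρ ζ - ρ z) + (1 / 4) * ‖ζ - z‖ ^ 2 ≤
        ‖∑ j, g z ζ j * (ζ j - z j)‖ := by
  classical
  set k : Fin n := ⟨n - 1, Nat.sub_lt hn Nat.one_pos⟩ with hk
  set a : Fin n → ℝ := fun j => if (j : ℕ) < q - 1 then lam j else 1 with ha
  have haj : ∀ j : Fin n, (if (j : ℕ) < q - 1 then lam j else 1) = a j := fun j => rfl
  have hRd : Differentiable ℝ R := hR.differentiable (by norm_num)
  obtain ⟨r, hr0, hr⟩ := exists_small_ball n R hR hR2
  refine ⟨Metric.ball 0 r, Metric.ball_mem_nhds 0 hr0, fun z hz ζ hζ hρz hρζ => ?_⟩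
  obtain ⟨D, hD, hDapp⟩ := rho_fderiv_formula n k a R hRd ρ (fun z => hρ z) ζ
  have hfd : fderiv ℝ ρ ζ = D := hD.fderiv
  have hcoord : ∀ j, (ζ - z) j = ζ j - z j := fun j => rfl
  have hsplit : ∀ j : Fin n, g z ζ j * (ζ j - z j) =
      wderiv n ρ ζ j * (ζ j - z j) +
        (if (j : ℕ) < q - 1 then (starRingEnd ℂ) (ζ j - z j) * (ζ j - z j) else 0) := by
    intro j
    rw [hg]
    by_cases h : (j : ℕ) < q - 1 <;> simp [h, map_sub] <;> ring
  have hΦ : (∑ j, g z ζ j * (ζ j - z j)) =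
      (∑ j, wderiv n ρ ζ j * (ζ j - z j)) +
      (∑ j : Fin n, if (j : ℕ) < q - 1 then (starRingEnd ℂ) (ζ j - z j) * (ζ j - z j) else 0) := by
    rw [← Finset.sum_add_distrib]
    exact Finset.sum_congr rfl fun j _ => hsplit j
  have hnormsq : ∀ w : ℂ, ‖w‖ ^ 2 = w.re * w.re + w.im * w.im := by
    intro w
    rw [show ‖w‖ ^ 2 = Complex.normSq w from by exact Complex.sq_norm _,
      Complex.normSq_apply]
  have hconjre : (∑ j : Fin n, if (j : ℕ) < q - 1 then
      (starRingEnd ℂ) (ζ j - z j) * (ζ j - z j) else 0).re =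
      ∑ j : Fin n, (if (j : ℕ) < q - 1 then ‖ζ j - z j‖ ^ 2 else 0) := by
    rw [Complex.re_sum]
    refine Finset.sum_congr rfl fun j _ => ?_
    by_cases h : (j : ℕ) < q - 1
    · rw [if_pos h, if_pos h, hnormsq]
      simp only [Complex.mul_re, Complex.conj_re, Complex.conj_im, Complex.sub_re,
        Complex.sub_im]
      ring
    · rw [if_neg h, if_neg h, Complex.zero_re]
  have hw2 : 2 * (∑ j, wderiv n ρ ζ j * (ζ j - z j)).re = D (ζ - z) := by
    have := two_re_sum_wderiv n ρ ζ (ζ - z)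
    rw [hfd] at this
    exact this
  have hnorm : ‖ζ - z‖ ^ 2 = ∑ j, ‖ζ j - z j‖ ^ 2 := by
    rw [EuclideanSpace.norm_eq, Real.sq_sqrt (Finset.sum_nonneg fun j _ => sq_nonneg _)]
    exact Finset.sum_congr rfl fun j _ => rfl
  have hQ : (∑ j, 2 * a j * ((ζ j).re * ((ζ j - z j)).re + (ζ j).im * ((ζ j - z j)).im)) =
      (∑ j, a j * ‖ζ j‖ ^ 2) - (∑ j, a j * ‖z j‖ ^ 2) + ∑ j, a j * ‖ζ j - z j‖ ^ 2 := by
    rw [← Finset.sum_sub_distrib, ← Finset.sum_add_distrib]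
    refine Finset.sum_congr rfl fun j _ => ?_
    rw [hnormsq, hnormsq, hnormsq]
    simp only [Complex.sub_re, Complex.sub_im]
    ring
  have hT : ‖R z - R ζ - fderiv ℝ R ζ (z - ζ)‖ ≤ (1/8) * ‖ζ - z‖ ^ 2 := by
    have := taylor_quad n R hR r hr z ζ hz hζ
    rwa [norm_sub_rev z ζ] at this
  have hzmζ : fderiv ℝ R ζ (z - ζ) = -(fderiv ℝ R ζ (ζ - z)) := by
    rw [show z - ζ = -(ζ - z) by abel, map_neg]
  have hρζ' : ρ ζ = -(ζ k).im + ∑ j : Fin n, a j * ‖ζ j‖ ^ 2 + R ζ := hρ ζ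
  have hρz' : ρ z = -(z k).im + ∑ j : Fin n, a j * ‖z j‖ ^ 2 + R z := hρ z
  have hmain : 2 * (∑ j, g z ζ j * (ζ j - z j)).re =
      (ρ ζ - ρ z) + ((∑ j, a j * ‖ζ j - z j‖ ^ 2) +
        2 * ∑ j : Fin n, (if (j : ℕ) < q - 1 then ‖ζ j - z j‖ ^ 2 else 0)) +
      (R z - R ζ - fderiv ℝ R ζ (z - ζ)) := by
    rw [hΦ, Complex.add_re, mul_add, hw2, hconjre, hDapp]
    simp only [hcoord]
    rw [hQ, hzmζ, hρζ', hρz',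
      show (ζ k - z k).im = (ζ k).im - (z k).im from Complex.sub_im _ _]
    ring
  have hQge : (∑ j, ‖ζ j - z j‖ ^ 2) ≤ (∑ j, a j * ‖ζ j - z j‖ ^ 2) +
      2 * ∑ j : Fin n, (if (j : ℕ) < q - 1 then ‖ζ j - z j‖ ^ 2 else 0) := by
    rw [Finset.mul_sum, ← Finset.sum_add_distrib]
    refine Finset.sum_le_sum fun j _ => ?_
    have hs := sq_nonneg ‖ζ j - z j‖
    by_cases h : (j : ℕ) < q - 1
    · have h1 : -1 ≤ lam j := neg_le_of_abs_le (hlam j h)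
      have haj' : a j = lam j := if_pos h
      rw [haj', if_pos h]
      nlinarith
    · have haj' : a j = 1 := if_neg h
      rw [haj', if_neg h]
      simp
  have hre : (∑ j, g z ζ j * (ζ j - z j)).re ≤
      ‖∑ j, g z ζ j * (ζ j - z j)‖ := Complex.re_le_norm _
  have hTabs : -((1/8) * ‖ζ - z‖ ^ 2) ≤ R z - R ζ - fderiv ℝ R ζ (z - ζ) := by
    have h' := hT
    rw [Real.norm_eq_abs] at h'
    linarith [(abs_le.mp h').1]
  have hρdiff : 0 ≤ ρ ζ - ρ z := by linarith
  linarith [hmain, hQge, hre, hTabs, hnorm, sq_nonneg ‖ζ - z‖]
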